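/- For any poset P and any interval I ⊆ P, the interval module kI (which assigns the field k at points of I, zero elsewhere, with identity internal maps between points of I and zero maps otherwise) is an indecomposable persistence module: if kI ≅ A ⊕ B then A = 0 or B = 0. -/

import Mathlib

open CategoryTheory CategoryTheory.Limits

def ZZ : Type := {p : ℤᵒᵈ × ℤ // OrderDual.ofDual p.1 = p.2 ∨ OrderDual.ofDual p.1 = p.2 + 1}

noncomputable instance : PartialOrder ZZ := Subtype.partialOrder _

def ZZ.a (p : ZZ) : ℤ := OrderDual.ofDual p.1.1
def ZZ.b (p : ZZ) : ℤ := p.1.2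

def Bipath (n m : ℕ) : Type := {z : ℕ // z < n + m}

def bipathLE (n : ℕ) (x y : ℕ) : Prop :=
  x = y ∨ (0 < n ∧ ((x ≤ y ∧ y ≤ n) ∨ (n ≤ y ∧ y ≤ x) ∨ x = 0 ∨ y = n))

lemma bipathLE_refl (n x : ℕ) : bipathLE n x x := by unfold bipathLE; omega

lemma bipathLE_trans {n x y z : ℕ} (h1 : bipathLE n x y) (h2 : bipathLE n y z) :
    bipathLE n x z := by unfold bipathLE at *; omega

lemma bipathLE_antisymm {n x y : ℕ} (h1 : bipathLE n x y) (h2 : bipathLE n y x) :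
    x = y := by unfold bipathLE at *; omega

instance (n m : ℕ) : PartialOrder (Bipath n m) where
  le x y := bipathLE n x.1 y.1
  le_refl x := bipathLE_refl n x.1
  le_trans _ _ _ h1 h2 := bipathLE_trans h1 h2
  le_antisymm _ _ h1 h2 := Subtype.ext (bipathLE_antisymm h1 h2)

def zetaFun (n m : ℕ) (a b : ℤ) : ℕ :=
  if b % ((n : ℤ) + m - 1) = 0 then (if a = b then n + m - 1 else 0)
  else if a = b then (b % ((n : ℤ) + m - 1)).toNat
  else if b % ((n : ℤ) + m - 1) ≤ (n : ℤ) - 1 then (b % ((n : ℤ) + m - 1)).toNat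
  else (b % ((n : ℤ) + m - 1)).toNat + 1

lemma zetaFun_lt (n m : ℕ) (hn : 1 < n) (hm : 1 < m) (a b : ℤ) :
    zetaFun n m a b < n + m := by
  unfold zetaFun
  have hN : (0:ℤ) < (n : ℤ) + m - 1 := by omega
  have h1 := Int.emod_nonneg b (by omega : ((n:ℤ) + m - 1) ≠ 0)
  have h2 := Int.emod_lt_of_pos b hN
  split_ifs <;> omega

def zeta (n m : ℕ) (hn : 1 < n) (hm : 1 < m) (p : ZZ) : Bipath n m :=
  ⟨zetaFun n m p.a p.b, zetaFun_lt n m hn hm _ _⟩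
open CategoryTheory CategoryTheory.Limits
open scoped Classical

section IntervalModule
variable (k : Type) [Field k] {P : Type} [Preorder P]

/-- Convexity of a subset of a poset. -/
def IsConvexIn (I : Set P) : Prop :=
  ∀ ⦃p z q : P⦄, p ∈ I → q ∈ I → p ≤ z → z ≤ q → z ∈ I

/-- Connectedness of a subset of a poset: any two points are joined by a
zigzag of comparabilities inside the subset. -/
def IsConnectedIn (I : Set P) : Prop :=
  ∀ x ∈ I, ∀ y ∈ I,
    Relation.ReflTransGen (fun a b => a ∈ I ∧ b ∈ I ∧ (a ≤ b ∨ b ≤ a)) x y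

/-- An interval of a poset: a nonempty convex connected subset. -/
structure IsIntervalIn (I : Set P) : Prop where
  nonempty : I.Nonempty
  convex : IsConvexIn I
  connected : IsConnectedIn I

/-- The fiber of the interval module at a point: `k` if `p ∈ I`, `0` otherwise. -/
def intervalFiber (I : Set P) (p : P) : Submodule k k where
  carrier := {x : k | p ∉ I → x = 0}
  add_mem' := by intro a b ha hb h; rw [ha h, hb h, add_zero]
  zero_mem' := fun _ => rfl
  smul_mem' := by intro c x hx h; rw [smul_eq_mul, hx h, mul_zero]

/-- Internal maps of the interval module. -/
noncomputable def intervalMap (I : Set P) (p q : P) :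
    intervalFiber k I p →ₗ[k] intervalFiber k I q where
  toFun x := ⟨if q ∈ I then x.1 else 0, fun hq => if_neg hq⟩
  map_add' x y := by apply Subtype.ext; by_cases hq : q ∈ I <;> simp [hq]
  map_smul' c x := by apply Subtype.ext; by_cases hq : q ∈ I <;> simp [hq]

/-- The interval module `kI` supported on a convex subset `I`:
it is `k` on `I` with identity internal maps, and `0` elsewhere. -/
noncomputable def intervalModule (I : Set P) (hI : IsConvexIn I) : P ⥤ ModuleCat k where
  obj p := ModuleCat.of k (intervalFiber k I p)
  map {p q} _ := ModuleCat.ofHom (intervalMap k I p q)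
  map_id p := by
    ext x
    show (if p ∈ I then x.1 else 0) = x.1
    by_cases hp : p ∈ I
    · simp [hp]
    · simp [hp, x.2 hp]
  map_comp {p q r} f g := by
    ext x
    show (if r ∈ I then x.1 else 0) = (if r ∈ I then (if q ∈ I then x.1 else 0) else 0)
    by_cases hr : r ∈ I
    · by_cases hq : q ∈ I
      · simp [hr, hq]
      · have hp : p ∉ I := fun hp => hq (hI hp hr f.le g.le)
        simp [hr, hq, x.2 hp]
    · simp [hr]

end IntervalModule

/-- The restriction functor along a monotone map, by precomposition. -/
noncomputable def restrictAlong (k : Type) [Field k] {P Q : Type} [Preorder P] [Preorder Q]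
    {f : P → Q} (hf : Monotone f) : (Q ⥤ ModuleCat k) ⥤ (P ⥤ ModuleCat k) :=
  (Functor.whiskeringLeft _ _ _).obj hf.functor


lemma ZZ.le_iff {p q : ZZ} : p ≤ q ↔ q.a ≤ p.a ∧ p.b ≤ q.b := Iff.rfl

/-- Translation of a zigzag point by `z * N` in both coordinates. -/
def ZZ.translate (N z : ℤ) (p : ZZ) : ZZ :=
  ⟨(OrderDual.toDual (p.a + z * N), p.b + z * N), by
    rcases p.2 with h | h
    · left; show p.a + z * N = p.b + z * N; unfold ZZ.a ZZ.b at *; omega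
    · right; show p.a + z * N = p.b + z * N + 1; unfold ZZ.a ZZ.b at *; omega⟩

/-- The interval `[a,b]_ZZ = {(c,d) ∈ ZZ : c ≤ b, d ≥ a}`. -/
def zzIcc (a b : ℤ) : Set ZZ := {p | p.a ≤ b ∧ a ≤ p.b}
/-- The interval `[a,b)_ZZ = {(c,d) ∈ ZZ : a ≤ d < b}`. -/
def zzIco (a b : ℤ) : Set ZZ := {p | a ≤ p.b ∧ p.b < b}
/-- The interval `(a,b]_ZZ = {(c,d) ∈ ZZ : a < c ≤ b}`. -/
def zzIoc (a b : ℤ) : Set ZZ := {p | a < p.a ∧ p.a ≤ b}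
/-- The interval `(a,b)_ZZ = {(c,d) ∈ ZZ : c > a, d < b}`. -/
def zzIoo (a b : ℤ) : Set ZZ := {p | a < p.a ∧ p.b < b}

lemma zzIcc_convex (a b : ℤ) : IsConvexIn (zzIcc a b) := by
  intro p z q hp hq hpz hzq
  exact ⟨le_trans (ZZ.le_iff.1 hpz).1 hp.1, le_trans hp.2 (ZZ.le_iff.1 hpz).2⟩

lemma zzIco_convex (a b : ℤ) : IsConvexIn (zzIco a b) := by
  intro p z q hp hq hpz hzq
  exact ⟨le_trans hp.1 (ZZ.le_iff.1 hpz).2, lt_of_le_of_lt (ZZ.le_iff.1 hzq).2 hq.2⟩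

lemma zzIoc_convex (a b : ℤ) : IsConvexIn (zzIoc a b) := by
  intro p z q hp hq hpz hzq
  exact ⟨lt_of_lt_of_le hq.1 (ZZ.le_iff.1 hzq).1, le_trans (ZZ.le_iff.1 hpz).1 hp.2⟩

lemma zzIoo_convex (a b : ℤ) : IsConvexIn (zzIoo a b) := by
  intro p z q hp hq hpz hzq
  exact ⟨lt_of_lt_of_le hq.1 (ZZ.le_iff.1 hzq).1, lt_of_le_of_lt (ZZ.le_iff.1 hzq).2 hq.2⟩

section ConvexLemmas
variable {P : Type} [Preorder P]

lemma isConvex_univ : IsConvexIn (Set.univ : Set P) := fun _ _ _ _ _ _ _ => trivial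

lemma isConvex_lower2 (a b : P) : IsConvexIn {z : P | z ≤ a ∨ z ≤ b} := by
  intro p z q hp hq hpz hzq
  rcases hq with h | h
  · exact Or.inl (le_trans hzq h)
  · exact Or.inr (le_trans hzq h)

lemma isConvex_upper2 (a b : P) : IsConvexIn {z : P | a ≤ z ∨ b ≤ z} := by
  intro p z q hp hq hpz hzq
  rcases hp with h | h
  · exact Or.inl (le_trans h hpz)
  · exact Or.inr (le_trans h hpz)

lemma isConvex_Icc (a b : P) : IsConvexIn {z : P | a ≤ z ∧ z ≤ b} :=
  fun _ _ _ hp hq hpz hzq => ⟨le_trans hp.1 hpz, le_trans hzq hq.2⟩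

end ConvexLemmas


section IndecAux
variable (k : Type) [Field k] {P : Type} [Preorder P] {I : Set P}

/-- The canonical generator of the fiber at a point of `I`. -/
noncomputable def fiberOne (p : P) (hp : p ∈ I) : intervalFiber k I p :=
  ⟨1, fun h => absurd hp h⟩

lemma fiber_eq_smul_one (p : P) (hp : p ∈ I) (x : intervalFiber k I p) :
    x = x.1 • fiberOne k p hp := by
  apply Subtype.ext
  show x.1 = x.1 * 1
  rw [mul_one]

variable (hI : IsConvexIn I)
variable (f : intervalModule k I hI ⟶ intervalModule k I hI)

/-- The scalar by which an endomorphism acts at a point of `I`. -/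
noncomputable def endoCoeff (p : P) (hp : p ∈ I) : k :=
  (f.app p (fiberOne k p hp)).1

lemma endo_app_val (p : P) (hp : p ∈ I) (x : intervalFiber k I p) :
    (f.app p x).1 = endoCoeff k hI f p hp * x.1 := by
  refine (congrArg (fun y => ((f.app p).hom y).1) (fiber_eq_smul_one k p hp x)).trans ?_
  refine (congrArg Subtype.val ((f.app p).hom.map_smul x.1 (fiberOne k p hp))).trans ?_
  show x.1 * _ = _
  rw [mul_comm]
  rfl

lemma endoCoeff_eq_of_le {p q : P} (hp : p ∈ I) (hq : q ∈ I) (hpq : p ≤ q) :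
    endoCoeff k hI f p hp = endoCoeff k hI f q hq := by
  have hnat := f.naturality (homOfLE hpq)
  have := congrArg (fun g => (g (fiberOne k p hp)).1) hnat
  simp only [ModuleCat.hom_comp, LinearMap.comp_apply] at this
  -- LHS : ((intervalModule k I hI).map _ ≫ f.app q) value
  have hmap : ((intervalModule k I hI).map (homOfLE hpq) (fiberOne k p hp)) =
      fiberOne k q hq := by
    apply Subtype.ext
    show (if q ∈ I then (1:k) else 0) = 1
    rw [if_pos hq]
  replace this := (congrArg (fun y => ((f.app q).hom y).1) hmap).symm.trans this
  have hmap2 : (((intervalModule k I hI).map (homOfLE hpq)) (f.app p (fiberOne k p hp))).1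
      = (f.app p (fiberOne k p hp)).1 := by
    show (if q ∈ I then _ else 0) = _
    rw [if_pos hq]
  replace this := this.trans hmap2
  exact this.symm

lemma endoCoeff_eq_of_connected {p q : P} (hp : p ∈ I) (hq : q ∈ I)
    (hcon : Relation.ReflTransGen (fun a b => a ∈ I ∧ b ∈ I ∧ (a ≤ b ∨ b ≤ a)) p q) :
    endoCoeff k hI f p hp = endoCoeff k hI f q hq := by
  induction hcon with
  | refl => rfl
  | tail _ hstep ih =>
    obtain ⟨ha, hb, hab⟩ := hstep
    rcases hab with hab | hab
    · exact (ih ha).trans (endoCoeff_eq_of_le k hI f ha hb hab)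
    · exact (ih ha).trans (endoCoeff_eq_of_le k hI f hb ha hab).symm

end IndecAux

/-- An idempotent endomorphism of an interval module is `0` or the identity. -/
lemma intervalModule_idem (k : Type) [Field k] {P : Type} [Preorder P]
    {I : Set P} (hI : IsIntervalIn I)
    (f : intervalModule k I hI.convex ⟶ intervalModule k I hI.convex)
    (hf : f ≫ f = f) : f = 0 ∨ f = 𝟙 _ := by
  obtain ⟨p₀, hp₀⟩ := hI.nonempty
  set c := endoCoeff k hI.convex f p₀ hp₀ with hc
  have hidem : c * c = c := by
    have := congrArg (fun g => (g.app p₀ (fiberOne k p₀ hp₀)).1) hf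
    simp only [NatTrans.comp_app, ModuleCat.hom_comp, LinearMap.comp_apply] at this
    erw [endo_app_val k hI.convex f p₀ hp₀] at this
    exact this
  have hcases : c = 0 ∨ c = 1 := IsIdempotentElem.iff_eq_zero_or_one.1 hidem
  have key : ∀ (p : P) (hp : p ∈ I), endoCoeff k hI.convex f p hp = c :=
    fun p hp => (endoCoeff_eq_of_connected k hI.convex f hp₀ hp
      (hI.connected p₀ hp₀ p hp)).symm
  rcases hcases with h0 | h1
  · left
    ext p x
    apply Subtype.ext
    show (f.app p x).1 = (0 : intervalFiber k I p).1
    by_cases hp : p ∈ I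
    · refine (endo_app_val k hI.convex f p hp x).trans ?_; rw [key p hp, h0, zero_mul]; rfl
    · exact (f.app p x).2 hp
  · right
    ext p x
    apply Subtype.ext
    show (f.app p x).1 = x.1
    by_cases hp : p ∈ I
    · refine (endo_app_val k hI.convex f p hp x).trans ?_; rw [key p hp, h1, one_mul]
    · rw [(f.app p x).2 hp, x.2 hp]
/-- Interval modules are indecomposable: if `kI ≅ A ⊕ B` then `A = 0` or `B = 0`. -/
theorem intervalModule_indecomposable (k : Type) [Field k] (P : Type) [PartialOrder P]
    (I : Set P) (hI : IsIntervalIn I)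
    (A B : P ⥤ ModuleCat k)
    (hA : ∀ p : P, FiniteDimensional k (A.obj p))
    (hB : ∀ p : P, FiniteDimensional k (B.obj p))
    (h : Nonempty (intervalModule k I hI.convex ≅ A ⊞ B)) :
    Limits.IsZero A ∨ Limits.IsZero B := by
  obtain ⟨φ⟩ := h
  -- The idempotent on kI corresponding to projection onto A.
  set e₁ : intervalModule k I hI.convex ⟶ intervalModule k I hI.convex :=
    φ.hom ≫ (biprod.fst ≫ biprod.inl) ≫ φ.inv with he₁def
  set e₂ : intervalModule k I hI.convex ⟶ intervalModule k I hI.convex :=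
    φ.hom ≫ (biprod.snd ≫ biprod.inr) ≫ φ.inv with he₂def
  have hsum : e₁ + e₂ = 𝟙 _ := by
    rw [he₁def, he₂def, ← Preadditive.comp_add, ← Preadditive.add_comp,
      biprod.total, Category.id_comp, φ.hom_inv_id]
  have hidem : e₁ ≫ e₁ = e₁ := by
    rw [he₁def]
    simp
  rcases intervalModule_idem k hI e₁ hidem with h0 | h1
  · left
    have hπ : (biprod.fst ≫ biprod.inl : A ⊞ B ⟶ A ⊞ B) = 0 := by
      have : φ.inv ≫ e₁ ≫ φ.hom = φ.inv ≫ (0 : _ ⟶ _) ≫ φ.hom := by rw [h0]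
      simpa [he₁def] using this
    rw [IsZero.iff_id_eq_zero]
    calc 𝟙 A = biprod.inl ≫ (biprod.fst ≫ biprod.inl) ≫ biprod.fst := by simp
    _ = 0 := by rw [hπ]; simp
  · right
    have he₂0 : e₂ = 0 := by
      have := hsum
      rw [h1] at this
      calc e₂ = (𝟙 _ + e₂) - 𝟙 _ := by abel
      _ = (e₂ + 𝟙 _) - 𝟙 _ := by rw [add_comm]
      _ = 0 := by rw [add_comm] at this; rw [this]; simp
    have hπ : (biprod.snd ≫ biprod.inr : A ⊞ B ⟶ A ⊞ B) = 0 := by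
      have : φ.inv ≫ e₂ ≫ φ.hom = φ.inv ≫ (0 : _ ⟶ _) ≫ φ.hom := by rw [he₂0]
      simpa [he₂def] using this
    rw [IsZero.iff_id_eq_zero]
    calc 𝟙 B = biprod.inr ≫ (biprod.snd ≫ biprod.inr) ≫ biprod.snd := by simp
    _ = 0 := by rw [hπ]; simp
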